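/- arXiv:1910.08641 — 4 statements merged into one kernel-verified Lean document; each statement's English description precedes it below -/
import Mathlib

section
/- Let N denote the standard normal CDF, let α = μ₁ - ρμ₂σ₁/σ₂, and for 0 ≤ t < T, v > 0 define d₁(t,v) = (ln(D/v) - σ₁²(1/2 + α/σ₁²)(T-t))/(σ₁√(T-t)), d₂ = d₁ + σ₁√(T-t), and b(t,v) = v e^{α(T-t)} N(d₁) + D(1 - N(d₂)). Then b(t,v) → min(v, D) as t → T⁻, for every v > 0 with v ≠ D. -/
open Real Filter

/-- Standard normal CDF. -/
noncomputable def stdNormalCDF (x : ℝ) : ℝ :=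
  ∫ z in Set.Iic x, (Real.sqrt (2 * Real.pi))⁻¹ * Real.exp (-z ^ 2 / 2)

lemma stdNormalCDF_eq (x : ℝ) :
    stdNormalCDF x = ProbabilityTheory.cdf (ProbabilityTheory.gaussianReal 0 1) x := by
  rw [ProbabilityTheory.cdf_eq_real, MeasureTheory.measureReal_def,
    ProbabilityTheory.gaussianReal_apply_eq_integral 0 one_ne_zero,
    ENNReal.toReal_ofReal]
  · unfold stdNormalCDF ProbabilityTheory.gaussianPDFReal
    norm_num
  · exact MeasureTheory.integral_nonneg fun z =>
      (ProbabilityTheory.gaussianPDFReal_nonneg 0 1 z)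

lemma stdNormalCDF_atTop : Tendsto stdNormalCDF atTop (nhds 1) := by
  simp only [funext stdNormalCDF_eq]
  exact ProbabilityTheory.tendsto_cdf_atTop _

lemma stdNormalCDF_atBot : Tendsto stdNormalCDF atBot (nhds 0) := by
  simp only [funext stdNormalCDF_eq]
  exact ProbabilityTheory.tendsto_cdf_atBot _


noncomputable def d₁ (α σ₁ D T t v : ℝ) : ℝ :=
  (Real.log (D / v) - σ₁ ^ 2 * (1 / 2 + α / σ₁ ^ 2) * (T - t)) / (σ₁ * Real.sqrt (T - t))

noncomputable def d₂ (α σ₁ D T t v : ℝ) : ℝ :=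
  d₁ α σ₁ D T t v + σ₁ * Real.sqrt (T - t)

/-- The Merton-style bond price function `b`. -/
noncomputable def bfun (α σ₁ D T t v : ℝ) : ℝ :=
  v * Real.exp (α * (T - t)) * stdNormalCDF (d₁ α σ₁ D T t v)
    + D * (1 - stdNormalCDF (d₂ α σ₁ D T t v))

section aux
variable {α σ₁ D T v : ℝ}

lemma sqrt_tendsto (T : ℝ) :
    Tendsto (fun t => Real.sqrt (T - t)) (nhdsWithin T (Set.Iio T)) (nhdsWithin 0 (Set.Ioi 0)) := by
  rw [tendsto_nhdsWithin_iff]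
  constructor
  · have : Tendsto (fun t => Real.sqrt (T - t)) (nhdsWithin T (Set.Iio T)) (nhds (Real.sqrt (T - T))) :=
      ((Real.continuous_sqrt.comp (continuous_const.sub continuous_id)).tendsto T).mono_left
        nhdsWithin_le_nhds
    simpa using this
  · filter_upwards [self_mem_nhdsWithin] with t ht
    exact Real.sqrt_pos.mpr (by simp at ht; linarith)

lemma inv_g_tendsto (hσ₁ : 0 < σ₁) (T : ℝ) :
    Tendsto (fun t => (σ₁ * Real.sqrt (T - t))⁻¹) (nhdsWithin T (Set.Iio T)) atTop := by
  have hg : Tendsto (fun t => σ₁ * Real.sqrt (T - t)) (nhdsWithin T (Set.Iio T))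
      (nhdsWithin 0 (Set.Ioi 0)) := by
    rw [tendsto_nhdsWithin_iff]
    refine ⟨?_, ?_⟩
    · have := (sqrt_tendsto T).mono_right nhdsWithin_le_nhds
      simpa using (tendsto_const_nhds (x := σ₁)).mul this
    · filter_upwards [tendsto_nhdsWithin_iff.mp (sqrt_tendsto T) |>.2] with t ht
      exact mul_pos hσ₁ ht
  exact tendsto_inv_nhdsGT_zero.comp hg

lemma d₁_eq (hσ₁ : 0 < σ₁) :
    ∀ t ∈ Set.Iio T, d₁ α σ₁ D T t v =
      Real.log (D / v) * (σ₁ * Real.sqrt (T - t))⁻¹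
        - (σ₁ * (1 / 2 + α / σ₁ ^ 2)) * Real.sqrt (T - t) := by
  intro t ht
  have hs : 0 < T - t := by simp at ht; linarith
  have hsq : Real.sqrt (T - t) > 0 := Real.sqrt_pos.mpr hs
  have hss : Real.sqrt (T - t) * Real.sqrt (T - t) = T - t := Real.mul_self_sqrt hs.le
  unfold d₁
  field_simp
  linear_combination (σ₁ ^ 2 + 2 * α) * hss

end aux

section aux2
variable {α σ₁ D T v : ℝ}

lemma sqrt_to_zero (T : ℝ) :
    Tendsto (fun t => Real.sqrt (T - t)) (nhdsWithin T (Set.Iio T)) (nhds 0) :=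
  (sqrt_tendsto T).mono_right nhdsWithin_le_nhds

lemma d₁_atTop (hσ₁ : 0 < σ₁) (hL : 0 < Real.log (D / v)) :
    Tendsto (fun t => d₁ α σ₁ D T t v) (nhdsWithin T (Set.Iio T)) atTop := by
  have h1 : Tendsto (fun t => Real.log (D / v) * (σ₁ * Real.sqrt (T - t))⁻¹)
      (nhdsWithin T (Set.Iio T)) atTop := (inv_g_tendsto hσ₁ T).const_mul_atTop hL
  have h2 : Tendsto (fun t => -((σ₁ * (1 / 2 + α / σ₁ ^ 2)) * Real.sqrt (T - t)))
      (nhdsWithin T (Set.Iio T)) (nhds (-(σ₁ * (1 / 2 + α / σ₁ ^ 2) * 0))) :=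
    (((sqrt_to_zero T).const_mul _).neg)
  have := h1.atTop_add (C := -(σ₁ * (1 / 2 + α / σ₁ ^ 2) * 0)) h2
  refine this.congr' ?_
  filter_upwards [self_mem_nhdsWithin] with t ht
  rw [d₁_eq hσ₁ t ht]; ring

lemma d₁_atBot (hσ₁ : 0 < σ₁) (hL : Real.log (D / v) < 0) :
    Tendsto (fun t => d₁ α σ₁ D T t v) (nhdsWithin T (Set.Iio T)) atBot := by
  have h1 : Tendsto (fun t => Real.log (D / v) * (σ₁ * Real.sqrt (T - t))⁻¹)
      (nhdsWithin T (Set.Iio T)) atBot := (inv_g_tendsto hσ₁ T).const_mul_atTop_of_neg hL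
  have h2 : Tendsto (fun t => -((σ₁ * (1 / 2 + α / σ₁ ^ 2)) * Real.sqrt (T - t)))
      (nhdsWithin T (Set.Iio T)) (nhds (-(σ₁ * (1 / 2 + α / σ₁ ^ 2) * 0))) :=
    (((sqrt_to_zero T).const_mul _).neg)
  have := h1.atBot_add (C := -(σ₁ * (1 / 2 + α / σ₁ ^ 2) * 0)) h2
  refine this.congr' ?_
  filter_upwards [self_mem_nhdsWithin] with t ht
  rw [d₁_eq hσ₁ t ht]; ring

lemma d₂_atTop (hσ₁ : 0 < σ₁) (hL : 0 < Real.log (D / v)) :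
    Tendsto (fun t => d₂ α σ₁ D T t v) (nhdsWithin T (Set.Iio T)) atTop := by
  have h2 : Tendsto (fun t => σ₁ * Real.sqrt (T - t)) (nhdsWithin T (Set.Iio T))
      (nhds (σ₁ * 0)) := (sqrt_to_zero T).const_mul _
  exact (d₁_atTop hσ₁ hL).atTop_add h2

lemma d₂_atBot (hσ₁ : 0 < σ₁) (hL : Real.log (D / v) < 0) :
    Tendsto (fun t => d₂ α σ₁ D T t v) (nhdsWithin T (Set.Iio T)) atBot := by
  have h2 : Tendsto (fun t => σ₁ * Real.sqrt (T - t)) (nhdsWithin T (Set.Iio T))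
      (nhds (σ₁ * 0)) := (sqrt_to_zero T).const_mul _
  exact (d₁_atBot hσ₁ hL).atBot_add h2

end aux2

theorem b_tendsto_payoff (μ₁ μ₂ ρ σ₁ σ₂ D T : ℝ)
    (hσ₁ : 0 < σ₁) (hσ₂ : 0 < σ₂) (hD : 0 < D) (hT : 0 < T) (hρ : |ρ| ≤ 1)
    (v : ℝ) (hv : 0 < v) (hvD : v ≠ D) :
    Tendsto (fun t => bfun (μ₁ - ρ * μ₂ * σ₁ / σ₂) σ₁ D T t v)
      (nhdsWithin T (Set.Iio T)) (nhds (min v D)) := by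
  set α := μ₁ - ρ * μ₂ * σ₁ / σ₂
  have hexp : Tendsto (fun t => Real.exp (α * (T - t))) (nhdsWithin T (Set.Iio T)) (nhds 1) := by
    have : Tendsto (fun t => α * (T - t)) (nhdsWithin T (Set.Iio T)) (nhds (α * 0)) := by
      have : Tendsto (fun t : ℝ => T - t) (nhdsWithin T (Set.Iio T)) (nhds (T - T)) :=
        ((continuous_const.sub continuous_id).tendsto T).mono_left nhdsWithin_le_nhds
      simpa using this.const_mul α
    simpa [Function.comp_def] using (Real.continuous_exp.tendsto _).comp this
  unfold bfun
  rcases lt_or_gt_of_ne hvD with hlt | hgt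
  · -- v < D : limit v
    have hL : 0 < Real.log (D / v) := Real.log_pos (by rw [lt_div_iff₀ hv]; linarith)
    have hN1 : Tendsto (fun t => stdNormalCDF (d₁ α σ₁ D T t v)) (nhdsWithin T (Set.Iio T))
        (nhds 1) := stdNormalCDF_atTop.comp (d₁_atTop hσ₁ hL)
    have hN2 : Tendsto (fun t => stdNormalCDF (d₂ α σ₁ D T t v)) (nhdsWithin T (Set.Iio T))
        (nhds 1) := stdNormalCDF_atTop.comp (d₂_atTop hσ₁ hL)
    have := (((tendsto_const_nhds (x := v)).mul hexp).mul hN1).add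
      ((tendsto_const_nhds (x := D)).mul ((tendsto_const_nhds (x := (1:ℝ))).sub hN2))
    rw [min_eq_left hlt.le]
    simpa using this
  · -- v > D : limit D
    have hL : Real.log (D / v) < 0 :=
      Real.log_neg (div_pos hD hv) ((div_lt_one hv).mpr hgt)
    have hN1 : Tendsto (fun t => stdNormalCDF (d₁ α σ₁ D T t v)) (nhdsWithin T (Set.Iio T))
        (nhds 0) := stdNormalCDF_atBot.comp (d₁_atBot hσ₁ hL)
    have hN2 : Tendsto (fun t => stdNormalCDF (d₂ α σ₁ D T t v)) (nhdsWithin T (Set.Iio T))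
        (nhds 0) := stdNormalCDF_atBot.comp (d₂_atBot hσ₁ hL)
    have := (((tendsto_const_nhds (x := v)).mul hexp).mul hN1).add
      ((tendsto_const_nhds (x := D)).mul ((tendsto_const_nhds (x := (1:ℝ))).sub hN2))
    rw [min_eq_right hgt.le]
    simpa using this
end

section
/- With b, d₁, d₂ as in the Merton-style bond pricing formula, the partial derivative of b with respect to v is ∂b/∂v(t,v) = e^{α(T-t)} N(d₁(t,v)), for all 0 ≤ t < T and v > 0. In particular ∂b/∂v > 0, so b is strictly increasing in v. -/
open Real

open MeasureTheory
lemma gauss_cont : Continuous (fun z : ℝ => (Real.sqrt (2 * Real.pi))⁻¹ * Real.exp (-z ^ 2 / 2)) := by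
  continuity

lemma gauss_pos (z : ℝ) : 0 < (Real.sqrt (2 * Real.pi))⁻¹ * Real.exp (-z ^ 2 / 2) := by
  apply mul_pos (inv_pos.2 (Real.sqrt_pos.2 (by positivity))) (Real.exp_pos _)

lemma gauss_integrable : Integrable (fun z : ℝ => (Real.sqrt (2 * Real.pi))⁻¹ * Real.exp (-z ^ 2 / 2)) := by
  apply Integrable.const_mul
  have h : (fun z : ℝ => Real.exp (-z ^ 2 / 2)) = fun z => Real.exp (-(1/2) * z ^ 2) := by
    ext z; ring_nf
  rw [h]
  exact integrable_exp_neg_mul_sq (by norm_num)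

lemma hasDerivAt_stdNormalCDF (x : ℝ) :
    HasDerivAt stdNormalCDF ((Real.sqrt (2 * Real.pi))⁻¹ * Real.exp (-x ^ 2 / 2)) x := by
  set f := fun z : ℝ => (Real.sqrt (2 * Real.pi))⁻¹ * Real.exp (-z ^ 2 / 2) with hf
  have key : stdNormalCDF = fun y => stdNormalCDF 0 + ∫ z in (0:ℝ)..y, f z := by
    ext y
    rw [← intervalIntegral.integral_Iic_sub_Iic gauss_integrable.integrableOn
      gauss_integrable.integrableOn]
    simp [stdNormalCDF]
  rw [key]
  exact (intervalIntegral.integral_hasDerivAt_right gauss_integrable.intervalIntegrable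
    (gauss_cont.stronglyMeasurable.stronglyMeasurableAtFilter) gauss_cont.continuousAt).const_add _

lemma stdNormalCDF_pos (x : ℝ) : 0 < stdNormalCDF x := by
  rw [stdNormalCDF]
  rw [setIntegral_pos_iff_support_of_nonneg_ae
    (Filter.Eventually.of_forall fun z => (gauss_pos z).le) gauss_integrable.integrableOn]
  have : Function.support (fun z : ℝ => (Real.sqrt (2 * Real.pi))⁻¹ * Real.exp (-z ^ 2 / 2)) = Set.univ := by
    ext z; simp only [Function.mem_support, Set.mem_univ, iff_true]
    exact (gauss_pos z).ne'
  rw [this, Set.univ_inter]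
  simp [Real.volume_Iic]

lemma main_deriv (α σ₁ D T t : ℝ) (hσ₁ : 0 < σ₁) (hD : 0 < D) (htT : t < T)
    (v : ℝ) (hv : 0 < v) :
    HasDerivAt (fun v => bfun α σ₁ D T t v)
      (Real.exp (α * (T - t)) * stdNormalCDF (d₁ α σ₁ D T t v)) v := by
  set τ := T - t with hτdef
  have hτ : 0 < τ := sub_pos.2 htT
  set s := σ₁ * Real.sqrt τ with hsdef
  have hs : 0 < s := mul_pos hσ₁ (Real.sqrt_pos.2 hτ)
  have hs2 : s ^ 2 = σ₁ ^ 2 * τ := by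
    rw [hsdef, mul_pow, Real.sq_sqrt hτ.le]
  set E := Real.exp (α * τ) with hEdef
  -- derivative of d₁ in v
  have hlog : HasDerivAt (fun v : ℝ => Real.log (D / v)) (-v⁻¹) v := by
    have h1 : HasDerivAt (fun v : ℝ => D / v) (D * (-(v ^ 2)⁻¹)) v := by
      simpa [div_eq_mul_inv] using (hasDerivAt_inv hv.ne').const_mul D
    have h2 := (Real.hasDerivAt_log (div_ne_zero hD.ne' hv.ne')).comp v h1
    refine h2.congr_deriv ?_
    field_simp
  have hd1 : HasDerivAt (fun v => d₁ α σ₁ D T t v) (-v⁻¹ / s) v := by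
    unfold d₁
    exact (hlog.sub_const _).div_const _
  have hd2 : HasDerivAt (fun v => d₂ α σ₁ D T t v) (-v⁻¹ / s) v := by
    unfold d₂
    exact hd1.add_const _
  set c := (Real.sqrt (2 * Real.pi))⁻¹ with hcdef
  have hN1 : HasDerivAt (fun v => stdNormalCDF (d₁ α σ₁ D T t v))
      ((c * Real.exp (-(d₁ α σ₁ D T t v) ^ 2 / 2)) * (-v⁻¹ / s)) v :=
    (hasDerivAt_stdNormalCDF _).comp v hd1
  have hN2 : HasDerivAt (fun v => stdNormalCDF (d₂ α σ₁ D T t v))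
      ((c * Real.exp (-(d₂ α σ₁ D T t v) ^ 2 / 2)) * (-v⁻¹ / s)) v :=
    (hasDerivAt_stdNormalCDF _).comp v hd2
  -- key identity
  have hsd1 : s * d₁ α σ₁ D T t v = Real.log D - Real.log v - s ^ 2 / 2 - α * τ := by
    rw [d₁, Real.log_div hD.ne' hv.ne', ← hsdef, hs2]
    field_simp
    ring
  have hd21 : d₂ α σ₁ D T t v = d₁ α σ₁ D T t v + s := by rw [d₂, hsdef]
  have hkey : v * E * Real.exp (-(d₁ α σ₁ D T t v) ^ 2 / 2)
      = D * Real.exp (-(d₂ α σ₁ D T t v) ^ 2 / 2) := by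
    set a1 := d₁ α σ₁ D T t v
    set a2 := d₂ α σ₁ D T t v
    rw [hEdef, ← Real.exp_log hv, ← Real.exp_log hD, ← Real.exp_add, ← Real.exp_add,
      ← Real.exp_add]
    congr 1
    rw [hd21]
    nlinarith [hsd1]
  -- assemble
  have hb1 : HasDerivAt (fun v : ℝ => v * E) E v := by
    simpa using (hasDerivAt_id v).mul_const E
  have hb := ((hb1.mul hN1).add ((hN2.const_sub 1).const_mul D))
  have heq : (fun v => bfun α σ₁ D T t v)
      = fun v => v * E * stdNormalCDF (d₁ α σ₁ D T t v)
        + D * (1 - stdNormalCDF (d₂ α σ₁ D T t v)) := by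
    ext w; rw [bfun]
  rw [heq]
  refine hb.congr_deriv ?_
  have expand : E * stdNormalCDF (d₁ α σ₁ D T t v)
      + v * E * (c * Real.exp (-(d₁ α σ₁ D T t v) ^ 2 / 2) * (-v⁻¹ / s))
      + D * -(c * Real.exp (-(d₂ α σ₁ D T t v) ^ 2 / 2) * (-v⁻¹ / s))
      = E * stdNormalCDF (d₁ α σ₁ D T t v)
      + (v * E * Real.exp (-(d₁ α σ₁ D T t v) ^ 2 / 2)
        - D * Real.exp (-(d₂ α σ₁ D T t v) ^ 2 / 2)) * (c * (-v⁻¹ / s)) := by ring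
  rw [expand, hkey, sub_self, zero_mul, add_zero]

theorem deriv_b_in_v (μ₁ μ₂ ρ σ₁ σ₂ D T t : ℝ)
    (hσ₁ : 0 < σ₁) (hσ₂ : 0 < σ₂) (hD : 0 < D) (ht : 0 ≤ t) (htT : t < T) :
    (∀ v : ℝ, 0 < v →
      HasDerivAt (fun v => bfun (μ₁ - ρ * μ₂ * σ₁ / σ₂) σ₁ D T t v)
        (Real.exp ((μ₁ - ρ * μ₂ * σ₁ / σ₂) * (T - t)) *
          stdNormalCDF (d₁ (μ₁ - ρ * μ₂ * σ₁ / σ₂) σ₁ D T t v)) v) ∧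
    (∀ v : ℝ, 0 < v →
      0 < Real.exp ((μ₁ - ρ * μ₂ * σ₁ / σ₂) * (T - t)) *
          stdNormalCDF (d₁ (μ₁ - ρ * μ₂ * σ₁ / σ₂) σ₁ D T t v)) ∧
    StrictMonoOn (fun v => bfun (μ₁ - ρ * μ₂ * σ₁ / σ₂) σ₁ D T t v) (Set.Ioi 0) := by
  set α := μ₁ - ρ * μ₂ * σ₁ / σ₂ with hα
  refine ⟨fun v hv => main_deriv α σ₁ D T t hσ₁ hD htT v hv,
    fun v hv => mul_pos (Real.exp_pos _) (stdNormalCDF_pos _), ?_⟩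
  apply strictMonoOn_of_deriv_pos (convex_Ioi 0)
  · intro v hv
    exact (main_deriv α σ₁ D T t hσ₁ hD htT v hv).continuousAt.continuousWithinAt
  · intro v hv
    rw [interior_Ioi] at hv
    rw [(main_deriv α σ₁ D T t hσ₁ hD htT v hv).deriv]
    exact mul_pos (Real.exp_pos _) (stdNormalCDF_pos _)
end

section
/- Let Z be standard normal, μ ∈ ℝ, s > 0, and 𝐝 = μ + sZ. Then |d/dμ E[N(𝐝)²]| = E[2N(𝐝)φ(𝐝)] ≤ 2/√(2π). Consequently, if μ(v) = C - (ln v)/(σ√τ) for constants C ∈ ℝ, σ, τ > 0, then |∂/∂v E[N(μ(v)+sZ)²]| ≤ 2/(v σ √(2πτ)). -/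
open MeasureTheory ProbabilityTheory

/-- Standard normal density. -/
noncomputable def stdNormalPDF (x : ℝ) : ℝ :=
  (Real.sqrt (2 * Real.pi))⁻¹ * Real.exp (-x ^ 2 / 2)


lemma pdf_cont : Continuous stdNormalPDF := by
  unfold stdNormalPDF; continuity

lemma pdf_nonneg (x : ℝ) : 0 ≤ stdNormalPDF x := by
  unfold stdNormalPDF; positivity

lemma pdf_le (x : ℝ) : stdNormalPDF x ≤ (Real.sqrt (2 * Real.pi))⁻¹ := by
  unfold stdNormalPDF
  have h1 : Real.exp (-x ^ 2 / 2) ≤ 1 := by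
    rw [Real.exp_le_one_iff]; nlinarith [sq_nonneg x]
  have h2 : (0:ℝ) ≤ (Real.sqrt (2 * Real.pi))⁻¹ := by positivity
  nlinarith

lemma pdf_integrable : Integrable stdNormalPDF := by
  have h := (integrable_exp_neg_mul_sq (by norm_num : (0:ℝ) < 1/2)).const_mul
    (Real.sqrt (2 * Real.pi))⁻¹
  convert h using 2 with x
  unfold stdNormalPDF
  ring_nf

lemma pdf_integral : ∫ x, stdNormalPDF x = 1 := by
  unfold stdNormalPDF
  rw [integral_const_mul]
  have : ∀ x : ℝ, Real.exp (-x ^ 2 / 2) = Real.exp (-(1/2) * x ^ 2) := by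
    intro x; ring_nf
  simp_rw [this, integral_gaussian]
  have : Real.pi / (1/2) = 2 * Real.pi := by ring
  rw [this, inv_mul_cancel₀]
  positivity

lemma cdf_hasDeriv (x : ℝ) : HasDerivAt stdNormalCDF (stdNormalPDF x) x := by
  have heq : stdNormalCDF = fun y => (∫ t in Set.Iic (0:ℝ), stdNormalPDF t) +
      ∫ t in (0:ℝ)..y, stdNormalPDF t := by
    funext y
    unfold stdNormalCDF
    have := intervalIntegral.integral_Iic_sub_Iic
      (pdf_integrable.integrableOn (s := Set.Iic (0:ℝ)))
      (pdf_integrable.integrableOn (s := Set.Iic y))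
    unfold stdNormalPDF at this ⊢
    linarith [this]
  rw [heq]
  exact (intervalIntegral.integral_hasDerivAt_right
    (pdf_cont.intervalIntegrable 0 x)
    (pdf_cont.stronglyMeasurableAtFilter _ _)
    pdf_cont.continuousAt).const_add _

lemma cdf_nonneg (x : ℝ) : 0 ≤ stdNormalCDF x := by
  unfold stdNormalCDF
  apply integral_nonneg
  intro z; positivity

lemma cdf_le_one (x : ℝ) : stdNormalCDF x ≤ 1 := by
  have h := setIntegral_le_integral (s := Set.Iic x) pdf_integrable
    (Filter.Eventually.of_forall pdf_nonneg)
  rw [pdf_integral] at h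
  exact h

lemma cdf_cont : Continuous stdNormalCDF :=
  continuous_iff_continuousAt.mpr fun x => (cdf_hasDeriv x).continuousAt

theorem deriv_expectation_Nsq_bound (s : ℝ) (hs : 0 < s) :
    (∀ m : ℝ,
      HasDerivAt (fun m => ∫ z, stdNormalCDF (m + s * z) ^ 2 ∂(gaussianReal 0 1))
        (∫ z, 2 * stdNormalCDF (m + s * z) * stdNormalPDF (m + s * z) ∂(gaussianReal 0 1)) m ∧
      |∫ z, 2 * stdNormalCDF (m + s * z) * stdNormalPDF (m + s * z) ∂(gaussianReal 0 1)| ≤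
        2 / Real.sqrt (2 * Real.pi)) ∧
    (∀ C σ τ : ℝ, 0 < σ → 0 < τ → ∀ v : ℝ, 0 < v →
      |deriv (fun v => ∫ z,
          stdNormalCDF ((C - Real.log v / (σ * Real.sqrt τ)) + s * z) ^ 2
            ∂(gaussianReal 0 1)) v| ≤
        2 / (v * σ * Real.sqrt (2 * Real.pi * τ))) := by
  set μ := gaussianReal 0 1
  have hmain : ∀ m : ℝ,
      HasDerivAt (fun m => ∫ z, stdNormalCDF (m + s * z) ^ 2 ∂μ)
        (∫ z, 2 * stdNormalCDF (m + s * z) * stdNormalPDF (m + s * z) ∂μ) m ∧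
      |∫ z, 2 * stdNormalCDF (m + s * z) * stdNormalPDF (m + s * z) ∂μ| ≤
        2 / Real.sqrt (2 * Real.pi) := by
    intro m
    have key : ∀ m₀ : ℝ,
        Integrable (fun z => 2 * stdNormalCDF (m₀ + s * z) * stdNormalPDF (m₀ + s * z)) μ ∧
        HasDerivAt (fun m => ∫ z, stdNormalCDF (m + s * z) ^ 2 ∂μ)
          (∫ z, 2 * stdNormalCDF (m₀ + s * z) * stdNormalPDF (m₀ + s * z) ∂μ) m₀ := by
      intro m₀
      refine hasDerivAt_integral_of_dominated_loc_of_deriv_le (s := Metric.ball m₀ 1) (Metric.ball_mem_nhds m₀ one_pos)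
        (F := fun m z => stdNormalCDF (m + s * z) ^ 2)
        (F' := fun m z => 2 * stdNormalCDF (m + s * z) * stdNormalPDF (m + s * z))
        (bound := fun _ => 2 / Real.sqrt (2 * Real.pi)) ?_ ?_ ?_ ?_ ?_ ?_
      · exact Filter.Eventually.of_forall fun x =>
          ((cdf_cont.comp (by continuity)).pow 2).aestronglyMeasurable
      · apply Integrable.mono' (g := fun _ => (1:ℝ)) (integrable_const 1)
        · exact ((cdf_cont.comp (by continuity)).pow 2).aestronglyMeasurable
        · exact Filter.Eventually.of_forall fun z => by
            rw [Real.norm_eq_abs, abs_of_nonneg (by positivity)]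
            exact pow_le_one₀ (cdf_nonneg _) (cdf_le_one _)
      · exact ((continuous_const.mul (cdf_cont.comp (by continuity))).mul
          (pdf_cont.comp (by continuity))).aestronglyMeasurable
      · refine Filter.Eventually.of_forall fun z x _ => ?_
        rw [Real.norm_eq_abs, abs_of_nonneg (by
          have := cdf_nonneg (x + s * z); have := pdf_nonneg (x + s * z); positivity)]
        have h1 := cdf_le_one (x + s * z)
        have h2 := pdf_le (x + s * z)
        have h3 := cdf_nonneg (x + s * z)
        have h4 := pdf_nonneg (x + s * z)
        have h5 : (0:ℝ) < Real.sqrt (2 * Real.pi) := by positivity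
        rw [div_eq_mul_inv]
        nlinarith
      · exact integrable_const _
      · refine Filter.Eventually.of_forall fun z x _ => ?_
        have h1 : HasDerivAt (fun m : ℝ => m + s * z) 1 x := by
          simpa using (hasDerivAt_id x).add_const (s * z)
        have h2 := ((cdf_hasDeriv (x + s * z)).comp x h1).pow 2
        convert h2 using 1
        · rfl
        · rfl
        simp [Function.comp]
    have hd := (key m).2
    refine ⟨hd, ?_⟩
    have hb : |∫ z, 2 * stdNormalCDF (m + s * z) * stdNormalPDF (m + s * z) ∂μ| ≤
        ∫ z, 2 / Real.sqrt (2 * Real.pi) ∂μ := by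
      rw [← Real.norm_eq_abs]
      apply norm_integral_le_of_norm_le (integrable_const _)
      refine Filter.Eventually.of_forall fun z => ?_
      rw [Real.norm_eq_abs, abs_of_nonneg (by
        have := cdf_nonneg (m + s * z); have := pdf_nonneg (m + s * z); positivity)]
      have h1 := cdf_le_one (m + s * z)
      have h2 := pdf_le (m + s * z)
      have h3 := cdf_nonneg (m + s * z)
      have h4 := pdf_nonneg (m + s * z)
      have h5 : (0:ℝ) < Real.sqrt (2 * Real.pi) := by positivity
      rw [div_eq_mul_inv]
      nlinarith
    calc |∫ z, 2 * stdNormalCDF (m + s * z) * stdNormalPDF (m + s * z) ∂μ|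
        ≤ ∫ z, 2 / Real.sqrt (2 * Real.pi) ∂μ := hb
      _ = 2 / Real.sqrt (2 * Real.pi) := by simp
  refine ⟨hmain, ?_⟩
  intro C σ τ hσ hτ v hv
  have hvne : v ≠ 0 := ne_of_gt hv
  have hinner : HasDerivAt (fun v : ℝ => C - Real.log v / (σ * Real.sqrt τ))
      (-(v⁻¹ / (σ * Real.sqrt τ))) v :=
    (((Real.hasDerivAt_log hvne).div_const (σ * Real.sqrt τ)).const_sub C)
  set m₀ := C - Real.log v / (σ * Real.sqrt τ)
  have hF := (hmain m₀).1
  have hcomp := hF.comp v hinner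
  have hde : deriv (fun v => ∫ z, stdNormalCDF ((C - Real.log v / (σ * Real.sqrt τ)) + s * z) ^ 2 ∂μ) v =
      (∫ z, 2 * stdNormalCDF (m₀ + s * z) * stdNormalPDF (m₀ + s * z) ∂μ) * -(v⁻¹ / (σ * Real.sqrt τ)) :=
    HasDerivAt.deriv (by exact hcomp)
  rw [hde]
  rw [abs_mul]
  have h1 := (hmain m₀).2
  have h2 : |(-(v⁻¹ / (σ * Real.sqrt τ)))| = 1 / (v * σ * Real.sqrt τ) := by
    rw [abs_neg, abs_of_nonneg (by positivity)]
    field_simp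
  rw [h2]
  have hst : Real.sqrt (2 * Real.pi * τ) = Real.sqrt (2 * Real.pi) * Real.sqrt τ := by
    rw [Real.sqrt_mul (by positivity)]
  rw [hst]
  have hsp : (0:ℝ) < Real.sqrt (2 * Real.pi) := by positivity
  have hstp : (0:ℝ) < Real.sqrt τ := Real.sqrt_pos.mpr hτ
  have habs : (0:ℝ) ≤ |∫ z, 2 * stdNormalCDF (m₀ + s * z) * stdNormalPDF (m₀ + s * z) ∂μ| :=
    abs_nonneg _
  calc |∫ z, 2 * stdNormalCDF (m₀ + s * z) * stdNormalPDF (m₀ + s * z) ∂μ| *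
        (1 / (v * σ * Real.sqrt τ))
      ≤ (2 / Real.sqrt (2 * Real.pi)) * (1 / (v * σ * Real.sqrt τ)) := by
        apply mul_le_mul_of_nonneg_right h1; positivity
    _ = 2 / (v * σ * (Real.sqrt (2 * Real.pi) * Real.sqrt τ)) := by
        field_simp
end

section
/- Define g(t,v) = b(t,v)/(v · ∂b/∂v(t,v)) = 1 + D(1 - N(d₂(t,v)))/(v N(d₁(t,v))) for 0 ≤ t < T, 0 < v ≤ D. If 1/2 + α/σ₁² > 0, then g is bounded on [0,T) × (0, D]: sup g < ∞. In particular, along any sequence (tₙ, vₙ) → (t, 0) with t ∈ [0,T], g(tₙ,vₙ) → 1, and along (tₙ,vₙ) → (T, v) with 0 < v < D, g(tₙ,vₙ) → 1. -/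
open Real

open Filter

/-- The ratio `b/(v ∂b/∂v)` in its simplified form. -/
noncomputable def gratio (α σ₁ D T t v : ℝ) : ℝ :=
  1 + D * (1 - stdNormalCDF (d₂ α σ₁ D T t v)) / (v * stdNormalCDF (d₁ α σ₁ D T t v))

namespace GR
open MeasureTheory Set Filter

noncomputable def phi (z : ℝ) : ℝ := (Real.sqrt (2 * Real.pi))⁻¹ * Real.exp (-z ^ 2 / 2)

lemma phi_pos (z : ℝ) : 0 < phi z := by unfold phi; positivity

lemma phi_nonneg (z : ℝ) : 0 ≤ phi z := (phi_pos z).le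

lemma phi_eq : phi = fun z : ℝ => (Real.sqrt (2 * Real.pi))⁻¹ * Real.exp (-(1/2 : ℝ) * z ^ 2) := by
  funext z; unfold phi
  rw [show (-z^2/2 : ℝ) = -(1/2 : ℝ) * z^2 by ring]

lemma integrable_phi : Integrable phi := by
  rw [phi_eq]
  exact (integrable_exp_neg_mul_sq (by norm_num)).const_mul _

lemma sqrt2pi_pos : 0 < Real.sqrt (2 * Real.pi) := Real.sqrt_pos.2 (by positivity)

lemma integral_phi : ∫ z : ℝ, phi z = 1 := by
  rw [phi_eq, integral_const_mul, integral_gaussian]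
  rw [show (π / (1/2) : ℝ) = 2 * π by ring]
  exact inv_mul_cancel₀ sqrt2pi_pos.ne'

lemma cdf_eq (x : ℝ) : stdNormalCDF x = ∫ z in Iic x, phi z := rfl

lemma cdf_add_tail (x : ℝ) : stdNormalCDF x + ∫ z in Ioi x, phi z = 1 := by
  rw [cdf_eq, intervalIntegral.integral_Iic_add_Ioi integrable_phi.integrableOn integrable_phi.integrableOn,
    integral_phi]

lemma one_sub_cdf (x : ℝ) : 1 - stdNormalCDF x = ∫ z in Ioi x, phi z := by
  linarith [cdf_add_tail x]

lemma cdf_le_one (x : ℝ) : stdNormalCDF x ≤ 1 := by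
  have := setIntegral_nonneg (μ := volume) (measurableSet_Ioi (a := x)) (fun z _ => phi_nonneg z)
  linarith [one_sub_cdf x, this]

lemma cdf_pos (x : ℝ) : 0 < stdNormalCDF x := by
  rw [cdf_eq]
  rw [setIntegral_pos_iff_support_of_nonneg_ae (ae_of_all _ phi_nonneg)
    integrable_phi.integrableOn]
  have hs : Function.support phi = univ := eq_univ_of_forall fun z => (phi_pos z).ne'
  rw [hs, univ_inter, Real.volume_Iic]
  exact ENNReal.zero_lt_top

lemma cdf_mono {x y : ℝ} (h : x ≤ y) : stdNormalCDF x ≤ stdNormalCDF y := by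
  rw [cdf_eq, cdf_eq]
  exact setIntegral_mono_set integrable_phi.integrableOn (ae_of_all _ phi_nonneg)
    (HasSubset.Subset.eventuallyLE (Iic_subset_Iic.2 h))

lemma tail_le {y : ℝ} (hy : 0 ≤ y) : 1 - stdNormalCDF y ≤ Real.exp (-y^2/2) := by
  rw [one_sub_cdf]
  set C : ℝ := (Real.sqrt (2 * Real.pi))⁻¹ * Real.exp (-y^2/2) with hC
  have hint : Integrable (fun z : ℝ => C * Real.exp (-(1/2:ℝ) * (z - y)^2)) :=
    ((integrable_exp_neg_mul_sq (by norm_num : (0:ℝ) < 1/2)).comp_sub_right y).const_mul C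
  have step1 : ∫ z in Ioi y, phi z ≤ ∫ z in Ioi y, C * Real.exp (-(1/2:ℝ) * (z - y)^2) := by
    apply setIntegral_mono_on integrable_phi.integrableOn hint.integrableOn measurableSet_Ioi
    intro z hz
    unfold phi
    rw [hC, mul_assoc, ← Real.exp_add]
    have hzy : y ≤ z := (mem_Ioi.1 hz).le
    gcongr
    nlinarith [mul_nonneg hy (sub_nonneg.2 hzy)]
  have step2 : ∫ z in Ioi y, C * Real.exp (-(1/2:ℝ) * (z - y)^2)
      ≤ ∫ z : ℝ, C * Real.exp (-(1/2:ℝ) * (z - y)^2) :=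
    setIntegral_le_integral hint (ae_of_all _ fun z => by positivity)
  have step3 : ∫ z : ℝ, C * Real.exp (-(1/2:ℝ) * (z - y)^2) = Real.exp (-y^2/2) := by
    rw [integral_const_mul, integral_sub_right_eq_self (fun z : ℝ => Real.exp (-(1/2:ℝ) * z^2)) y,
      integral_gaussian, show (π / (1/2) : ℝ) = 2 * π by ring, hC]
    rw [mul_comm (Real.sqrt (2 * Real.pi))⁻¹, mul_assoc,
      inv_mul_cancel₀ sqrt2pi_pos.ne', mul_one]
  linarith



noncomputable def cc (α σ₁ : ℝ) : ℝ := 1/2 + α/σ₁^2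
noncomputable def NN (α σ₁ T : ℝ) : ℝ := stdNormalCDF (-(cc α σ₁ * (σ₁ * Real.sqrt T)))

lemma NN_pos (α σ₁ T : ℝ) : 0 < NN α σ₁ T := cdf_pos _

variable {α σ₁ D T t v : ℝ}

lemma kpos (hσ₁ : 0 < σ₁) (ht : t < T) : 0 < σ₁ * Real.sqrt (T - t) :=
  mul_pos hσ₁ (Real.sqrt_pos.2 (by linarith))

lemma ksq (ht : t < T) : (σ₁ * Real.sqrt (T - t))^2 = σ₁^2 * (T - t) := by
  rw [mul_pow, Real.sq_sqrt (by linarith : (0:ℝ) ≤ T - t)]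

lemma kleK (hσ₁ : 0 < σ₁) (ht0 : 0 ≤ t) : σ₁ * Real.sqrt (T - t) ≤ σ₁ * Real.sqrt T := by
  gcongr
  linarith

lemma x_nonneg (hv : 0 < v) (hvD : v ≤ D) : 0 ≤ Real.log (D / v) :=
  Real.log_nonneg ((one_le_div hv).2 hvD)

lemma d₁_eq (hσ₁ : 0 < σ₁) (ht : t < T) :
    d₁ α σ₁ D T t v = Real.log (D / v) / (σ₁ * Real.sqrt (T - t))
      - cc α σ₁ * (σ₁ * Real.sqrt (T - t)) := by
  have hk := kpos hσ₁ ht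
  have h2 := ksq (σ₁ := σ₁) ht
  unfold d₁ cc
  rw [sub_div]
  congr 1
  rw [show σ₁^2*(1/2+α/σ₁^2)*(T-t) = (1/2+α/σ₁^2) * (σ₁*Real.sqrt (T-t))^2 by rw [h2]; ring,
    mul_div_assoc, pow_two (σ₁ * Real.sqrt (T-t)), mul_div_assoc, div_self hk.ne', mul_one]

lemma d₂_eq (hσ₁ : 0 < σ₁) (ht : t < T) :
    d₂ α σ₁ D T t v = Real.log (D / v) / (σ₁ * Real.sqrt (T - t))
      + (1 - cc α σ₁) * (σ₁ * Real.sqrt (T - t)) := by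
  unfold d₂
  rw [d₁_eq hσ₁ ht]
  ring

lemma term_nonneg (hD : 0 < D) (hv : 0 < v) :
    0 ≤ gratio α σ₁ D T t v - 1 := by
  unfold gratio
  have h1 := cdf_le_one (d₂ α σ₁ D T t v)
  have h2 := cdf_pos (d₁ α σ₁ D T t v)
  have : 0 ≤ D * (1 - stdNormalCDF (d₂ α σ₁ D T t v)) / (v * stdNormalCDF (d₁ α σ₁ D T t v)) :=
    div_nonneg (mul_nonneg hD.le (by linarith)) (mul_nonneg hv.le h2.le)
  linarith

lemma d₁_ge (hσ₁ : 0 < σ₁) (hα : 0 < cc α σ₁) (ht0 : 0 ≤ t) (ht : t < T)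
    (hv : 0 < v) (hvD : v ≤ D) :
    -(cc α σ₁ * (σ₁ * Real.sqrt T)) ≤ d₁ α σ₁ D T t v := by
  rw [d₁_eq hσ₁ ht]
  have hk := kpos hσ₁ ht
  have h1 : 0 ≤ Real.log (D / v) / (σ₁ * Real.sqrt (T - t)) :=
    div_nonneg (x_nonneg hv hvD) hk.le
  have h2 : cc α σ₁ * (σ₁ * Real.sqrt (T - t)) ≤ cc α σ₁ * (σ₁ * Real.sqrt T) := by
    have := kleK (T := T) (t := t) hσ₁ ht0
    nlinarith
  linarith

/-- the main reduction: term ≤ exp x * (1 - N d₂) / N₀ -/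
lemma term_le (hσ₁ : 0 < σ₁) (hD : 0 < D) (hα : 0 < cc α σ₁) (ht0 : 0 ≤ t) (ht : t < T)
    (hv : 0 < v) (hvD : v ≤ D) :
    gratio α σ₁ D T t v - 1 ≤
      Real.exp (Real.log (D / v)) * (1 - stdNormalCDF (d₂ α σ₁ D T t v)) / NN α σ₁ T := by
  unfold gratio
  have hB := cdf_pos (d₁ α σ₁ D T t v)
  have hN := NN_pos α σ₁ T
  have hBN : NN α σ₁ T ≤ stdNormalCDF (d₁ α σ₁ D T t v) :=
    cdf_mono (d₁_ge hσ₁ hα ht0 ht hv hvD)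
  have hA : 0 ≤ 1 - stdNormalCDF (d₂ α σ₁ D T t v) := by linarith [cdf_le_one (d₂ α σ₁ D T t v)]
  have hexp : Real.exp (Real.log (D / v)) = D / v := Real.exp_log (by positivity)
  have heq : D * (1 - stdNormalCDF (d₂ α σ₁ D T t v)) / (v * stdNormalCDF (d₁ α σ₁ D T t v))
      = Real.exp (Real.log (D / v)) * (1 - stdNormalCDF (d₂ α σ₁ D T t v))
        / stdNormalCDF (d₁ α σ₁ D T t v) := by
    rw [hexp]
    field_simp
  rw [heq]
  have : Real.exp (Real.log (D / v)) * (1 - stdNormalCDF (d₂ α σ₁ D T t v))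
      / stdNormalCDF (d₁ α σ₁ D T t v)
      ≤ Real.exp (Real.log (D / v)) * (1 - stdNormalCDF (d₂ α σ₁ D T t v)) / NN α σ₁ T := by
    gcongr
  linarith

/-- abstract tail estimate -/
lemma est {c k x : ℝ} (hk : 0 < k) (hd : 0 ≤ x/k + (1-c)*k) :
    Real.exp x * (1 - stdNormalCDF (x/k + (1-c)*k)) ≤ Real.exp (c*x - x^2/(2*k^2)) := by
  have h1 := tail_le hd
  have h2 : Real.exp x * (1 - stdNormalCDF (x/k + (1-c)*k))
      ≤ Real.exp x * Real.exp (-(x/k + (1-c)*k)^2/2) :=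
    mul_le_mul_of_nonneg_left h1 (Real.exp_pos x).le
  refine h2.trans ?_
  rw [← Real.exp_add, Real.exp_le_exp]
  have key : x + -(x/k + (1-c)*k)^2/2 = c*x - x^2/(2*k^2) - (1-c)^2*k^2/2 := by
    field_simp
    ring
  rw [key]
  have : 0 ≤ (1-c)^2*k^2/2 := by positivity
  linarith

lemma est2 {c k K x : ℝ} (hk : 0 < k) (hkK : k ≤ K) (hx : 0 ≤ x) :
    Real.exp (c*x - x^2/(2*k^2)) ≤ Real.exp (c^2*K^2/2) := by
  have hK : 0 < K := hk.trans_le hkK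
  rw [Real.exp_le_exp]
  have h1 : x^2/(2*K^2) ≤ x^2/(2*k^2) := by
    apply div_le_div_of_nonneg_left (sq_nonneg x) (by positivity) (by nlinarith)
  have h2 : c*x - x^2/(2*K^2) - c^2*K^2/2 = -((x - c*K^2)^2/(2*K^2)) := by
    field_simp
    ring
  have h3 : 0 ≤ (x - c*K^2)^2/(2*K^2) := by positivity
  linarith

lemma case_neg {c k K x : ℝ} (hk : 0 < k) (hkK : k ≤ K) (hx : 0 ≤ x)
    (hneg : x/k + (1-c)*k < 0) : x ≤ (c-1)*K^2 := by
  have h1 : x/k < (c-1)*k := by linarith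
  have h2 : x < (c-1)*k*k := by
    have := (div_lt_iff₀ hk).1 h1
    linarith
  have hc : 1 < c := by nlinarith [mul_pos hk hk]
  have hkk : k*k ≤ K*K := mul_le_mul hkK hkK hk.le (hk.trans_le hkK).le
  have h3 : (c-1)*(k*k) ≤ (c-1)*(K*K) := mul_le_mul_of_nonneg_left hkk (by linarith)
  nlinarith [h3]

/-- d₂ nonneg criterion -/
lemma d₂_nonneg (hσ₁ : 0 < σ₁) (ht : t < T)
    (hd : (cc α σ₁ - 1) * (σ₁ * Real.sqrt (T-t))^2 ≤ Real.log (D / v)) :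
    0 ≤ d₂ α σ₁ D T t v := by
  rw [d₂_eq hσ₁ ht]
  have hk := kpos hσ₁ ht
  rw [← sub_nonneg] at hd ⊢
  have h0 : Real.log (D/v) / (σ₁ * Real.sqrt (T-t)) + (1 - cc α σ₁) * (σ₁ * Real.sqrt (T-t)) - 0
      = (Real.log (D/v) - (cc α σ₁ - 1) * (σ₁ * Real.sqrt (T-t))^2) / (σ₁ * Real.sqrt (T-t)) := by
    field_simp
    ring
  rw [h0]
  positivity

lemma key_bound (hσ₁ : 0 < σ₁) (hD : 0 < D) (hα : 0 < cc α σ₁)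
    (ht0 : 0 ≤ t) (ht : t < T) (hv : 0 < v) (hvD : v ≤ D)
    (hd : (cc α σ₁ - 1) * (σ₁ * Real.sqrt (T-t))^2 ≤ Real.log (D / v)) :
    gratio α σ₁ D T t v - 1 ≤
      Real.exp (cc α σ₁ * Real.log (D/v)
        - (Real.log (D/v))^2 / (2*(σ₁*Real.sqrt (T-t))^2)) / NN α σ₁ T := by
  have h1 := term_le hσ₁ hD hα ht0 ht hv hvD
  refine h1.trans ?_
  have hk := kpos hσ₁ ht
  have hN := NN_pos α σ₁ T
  have hd2 : 0 ≤ Real.log (D/v) / (σ₁ * Real.sqrt (T-t)) + (1 - cc α σ₁) * (σ₁ * Real.sqrt (T-t)) := by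
    have := d₂_nonneg hσ₁ ht hd
    rwa [d₂_eq hσ₁ ht] at this
  have h2 : Real.exp (Real.log (D / v)) * (1 - stdNormalCDF (d₂ α σ₁ D T t v))
      ≤ Real.exp (cc α σ₁ * Real.log (D/v) - (Real.log (D/v))^2 / (2*(σ₁*Real.sqrt (T-t))^2)) := by
    rw [d₂_eq hσ₁ ht]
    exact est hk hd2
  gcongr


lemma tendsto_one (hσ₁ : 0 < σ₁) (hD : 0 < D) (hα : 0 < cc α σ₁)
    (tseq vseq : ℕ → ℝ) (htm : ∀ n, tseq n ∈ Set.Ico 0 T) (hvm : ∀ n, 0 < vseq n ∧ vseq n ≤ D)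
    (hev : ∀ᶠ n in atTop, (cc α σ₁ - 1) * (σ₁ * Real.sqrt (T - tseq n))^2
      ≤ Real.log (D / vseq n))
    (hexp : Tendsto (fun n => Real.exp (cc α σ₁ * Real.log (D / vseq n)
      - (Real.log (D / vseq n))^2 / (2*(σ₁*Real.sqrt (T - tseq n))^2))) atTop (nhds 0)) :
    Tendsto (fun n => gratio α σ₁ D T (tseq n) (vseq n)) atTop (nhds 1) := by
  have hterm : Tendsto (fun n => gratio α σ₁ D T (tseq n) (vseq n) - 1) atTop (nhds 0) := by
    apply squeeze_zero' (Eventually.of_forall fun n => term_nonneg hD (hvm n).1)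
      (hev.mono fun n hn =>
        key_bound hσ₁ hD hα (htm n).1 (htm n).2 (hvm n).1 (hvm n).2 hn)
    simpa using hexp.div_const (NN α σ₁ T)
  have h2 := hterm.add_const 1
  simpa using h2

end GR

set_option maxHeartbeats 1000000 in
theorem gratio_bounded (α σ₁ D T : ℝ)
    (hσ₁ : 0 < σ₁) (hD : 0 < D) (hT : 0 < T)
    (hα : 0 < 1 / 2 + α / σ₁ ^ 2) :
    (∃ M : ℝ, ∀ t v : ℝ, 0 ≤ t → t < T → 0 < v → v ≤ D →
      gratio α σ₁ D T t v ≤ M) ∧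
    (∀ (tseq vseq : ℕ → ℝ) (t : ℝ), t ∈ Set.Icc 0 T →
      (∀ n, tseq n ∈ Set.Ico 0 T) → (∀ n, 0 < vseq n ∧ vseq n ≤ D) →
      Tendsto tseq atTop (nhds t) → Tendsto vseq atTop (nhds 0) →
      Tendsto (fun n => gratio α σ₁ D T (tseq n) (vseq n)) atTop (nhds 1)) ∧
    (∀ (tseq vseq : ℕ → ℝ) (v : ℝ), 0 < v → v < D →
      (∀ n, tseq n ∈ Set.Ico 0 T) → (∀ n, 0 < vseq n ∧ vseq n ≤ D) →
      Tendsto tseq atTop (nhds T) → Tendsto vseq atTop (nhds v) →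
      Tendsto (fun n => gratio α σ₁ D T (tseq n) (vseq n)) atTop (nhds 1)) := by
  have hc : 0 < GR.cc α σ₁ := hα
  set c := GR.cc α σ₁ with hcdef
  set K := σ₁ * Real.sqrt T with hKdef
  have hKpos : 0 < K := mul_pos hσ₁ (Real.sqrt_pos.2 hT)
  have hN := GR.NN_pos α σ₁ T
  refine ⟨⟨1 + (Real.exp (c^2*K^2/2) + Real.exp ((c - 1)*K^2))/GR.NN α σ₁ T, ?_⟩, ?_, ?_⟩
  · -- Part 1: boundedness
    intro t v ht0 ht hv hvD
    have hk := GR.kpos (t := t) hσ₁ ht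
    have hkK : σ₁ * Real.sqrt (T - t) ≤ K := GR.kleK hσ₁ ht0
    have hx := GR.x_nonneg (D := D) hv hvD
    have h1 := GR.term_le hσ₁ hD hc ht0 ht hv hvD
    have h2 : Real.exp (Real.log (D/v)) * (1 - stdNormalCDF (d₂ α σ₁ D T t v))
        ≤ Real.exp (c^2*K^2/2) + Real.exp ((c-1)*K^2) := by
      rcases le_or_gt 0 (d₂ α σ₁ D T t v) with hd | hd
      · have hd' : 0 ≤ Real.log (D/v)/(σ₁*Real.sqrt (T-t)) + (1 - c)*(σ₁*Real.sqrt (T-t)) := by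
          rwa [GR.d₂_eq hσ₁ ht] at hd
        have he1 : Real.exp (Real.log (D/v)) * (1 - stdNormalCDF (d₂ α σ₁ D T t v))
            ≤ Real.exp (c * Real.log (D/v)
              - (Real.log (D/v))^2/(2*(σ₁*Real.sqrt (T-t))^2)) := by
          rw [GR.d₂_eq hσ₁ ht]
          exact GR.est hk hd'
        have h3 := GR.est2 (c := c) (x := Real.log (D/v)) hk hkK hx
        have h4 : (0:ℝ) < Real.exp ((c-1)*K^2) := Real.exp_pos _
        linarith
      · have hxle : Real.log (D/v) ≤ (c - 1)*K^2 := by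
          refine GR.case_neg hk hkK hx ?_
          rwa [GR.d₂_eq hσ₁ ht] at hd
        have h5 : Real.exp (Real.log (D/v)) * (1 - stdNormalCDF (d₂ α σ₁ D T t v))
            ≤ Real.exp (Real.log (D/v)) := by
          nlinarith [Real.exp_pos (Real.log (D/v)), GR.cdf_le_one (d₂ α σ₁ D T t v),
            GR.cdf_pos (d₂ α σ₁ D T t v)]
        have h6 : Real.exp (Real.log (D/v)) ≤ Real.exp ((c - 1)*K^2) := Real.exp_le_exp.2 hxle
        have h7 : (0:ℝ) < Real.exp (c^2*K^2/2) := Real.exp_pos _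
        linarith
    have h8 : Real.exp (Real.log (D/v)) * (1 - stdNormalCDF (d₂ α σ₁ D T t v)) / GR.NN α σ₁ T
        ≤ (Real.exp (c^2*K^2/2) + Real.exp ((c-1)*K^2)) / GR.NN α σ₁ T := by gcongr
    linarith
  · -- Part 2: v → 0
    intro tseq vseq t _ htm hvm _ hvt
    have hvpos : Tendsto vseq atTop (nhdsWithin 0 (Set.Ioi 0)) :=
      tendsto_nhdsWithin_iff.2 ⟨hvt, Eventually.of_forall fun n => (hvm n).1⟩
    have hlx : Tendsto (fun n => Real.log (D / vseq n)) atTop atTop := by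
      have h1 : Tendsto (fun n => Real.log (vseq n)) atTop atBot :=
        Real.tendsto_log_nhdsGT_zero.comp hvpos
      have h2 : ∀ n, Real.log (D / vseq n) = Real.log D + -Real.log (vseq n) := fun n => by
        rw [Real.log_div hD.ne' (hvm n).1.ne', sub_eq_add_neg]
      simp_rw [h2]
      have h3 : Tendsto (fun n => -Real.log (vseq n)) atTop atTop :=
        tendsto_neg_atBot_atTop.comp h1
      exact tendsto_atTop_add_const_left atTop (Real.log D) h3
    have hev : ∀ᶠ n in atTop,
        (c - 1) * (σ₁ * Real.sqrt (T - tseq n))^2 ≤ Real.log (D / vseq n) := by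
      filter_upwards [hlx.eventually_ge_atTop ((c - 1)*K^2), hlx.eventually_ge_atTop 0]
        with n h1 h0
      have hkK := GR.kleK (T := T) (t := tseq n) hσ₁ (htm n).1
      have hk := GR.kpos (t := tseq n) hσ₁ (htm n).2
      rcases le_or_gt c 1 with h | h
      · nlinarith [sq_nonneg (σ₁ * Real.sqrt (T - tseq n))]
      · have h3 : (c-1)*((σ₁ * Real.sqrt (T - tseq n))*(σ₁ * Real.sqrt (T - tseq n)))
            ≤ (c-1)*(K*K) :=
          mul_le_mul_of_nonneg_left (mul_le_mul hkK hkK hk.le hKpos.le)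
            (by linarith : (0:ℝ) ≤ c - 1)
        nlinarith [h3]
    have hbotK : Tendsto (fun n => c * Real.log (D / vseq n)
        - (Real.log (D / vseq n))^2/(2*K^2)) atTop atBot := by
      have hmul : Tendsto (fun n => c * Real.log (D / vseq n)) atTop atTop :=
        hlx.const_mul_atTop hc
      have hneg : Tendsto (fun n => -(c * Real.log (D / vseq n))) atTop atBot :=
        tendsto_neg_atTop_atBot.comp hmul
      apply tendsto_atBot_mono' atTop ?_ hneg
      filter_upwards [hlx.eventually_ge_atTop (4*c*K^2), hlx.eventually_ge_atTop 0]
        with n h4 h0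
      have hdiv : 2*c*Real.log (D / vseq n) ≤ (Real.log (D / vseq n))^2/(2*K^2) := by
        rw [le_div_iff₀ (by positivity)]
        nlinarith
      linarith
    have hexpK : Tendsto (fun n => Real.exp (c * Real.log (D / vseq n)
        - (Real.log (D / vseq n))^2/(2*K^2))) atTop (nhds 0) :=
      Real.tendsto_exp_atBot.comp hbotK
    have hexp : Tendsto (fun n => Real.exp (c * Real.log (D / vseq n)
        - (Real.log (D / vseq n))^2 / (2*(σ₁*Real.sqrt (T - tseq n))^2))) atTop (nhds 0) := by
      apply squeeze_zero' (Eventually.of_forall fun n => (Real.exp_pos _).le)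
        (Eventually.of_forall fun n => ?_) hexpK
      rw [Real.exp_le_exp]
      have hkK := GR.kleK (T := T) (t := tseq n) hσ₁ (htm n).1
      have hk := GR.kpos (t := tseq n) hσ₁ (htm n).2
      have : (Real.log (D / vseq n))^2/(2*K^2)
          ≤ (Real.log (D / vseq n))^2/(2*(σ₁*Real.sqrt (T - tseq n))^2) :=
        div_le_div_of_nonneg_left (sq_nonneg _) (by positivity) (by nlinarith)
      linarith
    exact GR.tendsto_one hσ₁ hD hc tseq vseq htm hvm hev hexp
  · -- Part 3: t → T
    intro tseq vseq v hv hvD htm hvm htt hvt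
    have hx0 : (0:ℝ) < Real.log (D / v) := Real.log_pos ((one_lt_div hv).2 hvD)
    have hlv : Tendsto (fun n => Real.log (D / vseq n)) atTop (nhds (Real.log (D / v))) := by
      have h1 : Tendsto (fun n => D / vseq n) atTop (nhds (D / v)) :=
        tendsto_const_nhds.div hvt hv.ne'
      exact ((Real.continuousAt_log (div_pos hD hv).ne').tendsto).comp h1
    have hk0 : Tendsto (fun n => σ₁ * Real.sqrt (T - tseq n)) atTop (nhds 0) := by
      have h1 : Tendsto (fun n => T - tseq n) atTop (nhds 0) := by
        have := (tendsto_const_nhds (x := T) (f := atTop (α := ℕ))).sub htt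
        simpa using this
      have h2 : Tendsto (fun n => Real.sqrt (T - tseq n)) atTop (nhds 0) := by
        have := (Real.continuous_sqrt.tendsto 0).comp h1
        simpa [Function.comp_def] using this
      have := h2.const_mul σ₁
      simpa using this
    have hquad : Tendsto (fun n => (c - 1) * (σ₁ * Real.sqrt (T - tseq n))^2) atTop (nhds 0) := by
      have := (hk0.pow 2).const_mul (c - 1)
      simpa using this
    have hev : ∀ᶠ n in atTop,
        (c - 1) * (σ₁ * Real.sqrt (T - tseq n))^2 ≤ Real.log (D / vseq n) := by
      filter_upwards [hquad.eventually (eventually_lt_nhds (by linarith :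
          (0:ℝ) < Real.log (D/v)/2)), hlv.eventually (eventually_gt_nhds (by linarith :
          Real.log (D/v)/2 < Real.log (D/v)))] with n h1 h2
      linarith
    have hk2 : Tendsto (fun n => 2*(σ₁ * Real.sqrt (T - tseq n))^2) atTop (nhdsWithin 0 (Set.Ioi 0)) := by
      refine tendsto_nhdsWithin_iff.2 ⟨by simpa using (hk0.pow 2).const_mul 2,
        Eventually.of_forall fun n => ?_⟩
      have hk := GR.kpos (t := tseq n) hσ₁ (htm n).2
      exact Set.mem_Ioi.2 (by positivity)
    have hbig : Tendsto (fun n => (Real.log (D / vseq n))^2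
        * (2*(σ₁ * Real.sqrt (T - tseq n))^2)⁻¹) atTop atTop :=
      Tendsto.pos_mul_atTop (pow_pos hx0 2) (hlv.pow 2) hk2.inv_tendsto_nhdsGT_zero
    have hbot : Tendsto (fun n => c * Real.log (D / vseq n)
        - (Real.log (D / vseq n))^2 / (2*(σ₁ * Real.sqrt (T - tseq n))^2)) atTop atBot := by
      have hnegbig : Tendsto (fun n => -((Real.log (D / vseq n))^2
          * (2*(σ₁ * Real.sqrt (T - tseq n))^2)⁻¹)) atTop atBot :=
        tendsto_neg_atTop_atBot.comp hbig
      have hf2 : Tendsto (fun n => (c * Real.log (D/v) + 1) + -((Real.log (D / vseq n))^2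
          * (2*(σ₁ * Real.sqrt (T - tseq n))^2)⁻¹)) atTop atBot :=
        tendsto_atBot_add_const_left atTop (c * Real.log (D/v) + 1) hnegbig
      apply tendsto_atBot_mono' atTop ?_ hf2
      filter_upwards [(hlv.const_mul c).eventually
        (eventually_lt_nhds (lt_add_one (c * Real.log (D/v))))] with n h1
      rw [div_eq_mul_inv (Real.log (D / vseq n) ^ 2)
        (2 * (σ₁ * Real.sqrt (T - tseq n)) ^ 2)]
      linarith
    have hexp : Tendsto (fun n => Real.exp (c * Real.log (D / vseq n)
        - (Real.log (D / vseq n))^2 / (2*(σ₁ * Real.sqrt (T - tseq n))^2))) atTop (nhds 0) :=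
      Real.tendsto_exp_atBot.comp hbot
    exact GR.tendsto_one hσ₁ hD hc tseq vseq htm hvm hev hexp
end
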